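/- If (L, <) is a well-ordered subset of a structure M such that every order-preserving injection L → L extends to an automorphism of M, and L is order-indiscernible in M, then L cannot be the union of the supports of a set V of elements of a permutation module FM over FAut(M) generating a submodule that is not finitely generated. -/

import Mathlib

open FirstOrder Cardinal

/-- The `F Aut(M)`-submodule of the permutation module `M →₀ F` generated by a
set `s` of vectors: the `F`-span of all `Aut(M)`-images of elements of `s`. -/
noncomputable def autSpan (L : FirstOrder.Language) {M : Type} [L.Structure M]
    (F : Type) [Field F] (s : Set (M →₀ F)) : Submodule F (M →₀ F) :=
  Submodule.span F {w | ∃ (g : M ≃[L] M) (v : M →₀ F), v ∈ s ∧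
    w = Finsupp.mapDomain g v}

namespace Stmt14Aux

open Ordinal

variable {α : Type} (r : α → α → Prop) [IsWellOrder α r]

/-- The final segment `[a, ∞)` of a well order. -/
def tl (a : α) : Set α := {b | ¬ r b a}

variable {r}

set_option linter.unusedSectionVars false

lemma mem_tl_self (a : α) : a ∈ tl r a := irrefl_of r a

lemma mem_tl_iff {a b : α} : b ∈ tl r a ↔ b = a ∨ r a b := by
  constructor
  · intro h
    rcases trichotomous_of r b a with h' | h' | h'
    · exact absurd h' h
    · exact Or.inl h'
    · exact Or.inr h'
  · rintro (rfl | h')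
    · exact mem_tl_self _
    · exact fun hba => asymm_of r h' hba

lemma not_mem_tl_iff {a b : α} : b ∉ tl r a ↔ r b a := not_not

lemma tl_subset {a b : α} (h : b ∈ tl r a) : tl r b ⊆ tl r a := by
  intro y hy hya
  rcases trichotomous_of r y b with h' | h' | h'
  · exact hy h'
  · exact h (h' ▸ hya)
  · exact h (trans_of r h' hya)

lemma mem_tl_of_mem_tl {a b y : α} (h : b ∈ tl r a) (hy : y ∈ tl r b) : y ∈ tl r a :=
  tl_subset h hy

variable (r)

/-- The ordinal measuring the order type of the tail above `a`. -/
noncomputable def δ (a : α) : Ordinal := Ordinal.type (Subrel r (· ∈ tl r a))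

/-- `a` is movable iff infinitely many elements lie above it. -/
def mov (a : α) : Prop := (tl r a).Infinite

variable {r}

lemma delta_le_of_mem {a b : α} (h : b ∈ tl r a) : δ r b ≤ δ r a := by
  refine (Ordinal.type_le_iff').2 ⟨?_⟩
  exact (Subrel.relEmbedding r (· ∈ tl r b)).codRestrict (tl r a)
    (fun x => tl_subset h x.2)

/-- from equality of δ, an isomorphism of tails. -/
noncomputable def tailIso {a b : α} (h : δ r a = δ r b) :
    Subrel r (· ∈ tl r a) ≃r Subrel r (· ∈ tl r b) :=
  Classical.choice (Ordinal.type_eq.mp h)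

lemma mov_congr {a b : α} (h : δ r a = δ r b) : mov r a ↔ mov r b := by
  rw [mov, mov, ← Set.infinite_coe_iff, ← Set.infinite_coe_iff]
  exact (tailIso h).toEquiv.infinite_iff

lemma eq_of_delta_eq_of_not_mov {a b : α} (h : δ r a = δ r b) (hfin : ¬ mov r a) :
    a = b := by
  have hfb : ¬ mov r b := fun hb => hfin ((mov_congr h).2 hb)
  have key : ∀ x y : α, δ r x = δ r y → ¬ mov r x → r x y → False := by
    intro x y hxy hfx hr
    have h1 : tl r y ⊆ tl r x := tl_subset (mem_tl_iff.2 (Or.inr hr))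
    have h2 : x ∉ tl r y := not_mem_tl_iff.2 hr
    have hss : tl r y ⊂ tl r x := ⟨h1, fun hsub => h2 (hsub (mem_tl_self x))⟩
    have hfinx : (tl r x).Finite := Set.not_infinite.1 hfx
    have hlt : (tl r y).ncard < (tl r x).ncard := Set.ncard_lt_ncard hss hfinx
    have hcard : (tl r x).ncard = (tl r y).ncard := by
      rw [← Nat.card_coe_set_eq, ← Nat.card_coe_set_eq]
      exact Nat.card_congr (tailIso hxy).toEquiv
    omega
  rcases trichotomous_of r a b with h' | h' | h'
  · exact absurd h' (fun h'' => key a b h hfin h'')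
  · exact h'
  · exact absurd h' (fun h'' => key b a h.symm hfb h'')


variable (r)

open Classical in
/-- The successor of `a`. -/
noncomputable def nxt (a : α) : α :=
  if h : ((tl r a) \ {a}).Nonempty then (IsWellFounded.wf (r := r)).min _ h else a

variable {r}

lemma nxt_spec {a : α} (h : mov r a) :
    r a (nxt r a) ∧ tl r (nxt r a) = tl r a \ {a} := by
  have hne : ((tl r a) \ {a}).Nonempty := (h.diff (Set.finite_singleton a)).nonempty
  have hmem : nxt r a ∈ (tl r a) \ {a} := by
    rw [nxt, dif_pos hne]
    exact (IsWellFounded.wf (r := r)).min_mem _ hne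
  have hmin : ∀ y ∈ (tl r a) \ {a}, ¬ r y (nxt r a) := by
    intro y hy
    rw [nxt, dif_pos hne]
    exact (IsWellFounded.wf (r := r)).not_lt_min _ hy
  have hras : r a (nxt r a) := by
    rcases mem_tl_iff.1 hmem.1 with h' | h'
    · exact absurd h' hmem.2
    · exact h'
  refine ⟨hras, ?_⟩
  ext y
  constructor
  · intro hy
    refine ⟨mem_tl_of_mem_tl hmem.1 hy, ?_⟩
    rintro rfl
    exact hy hras
  · intro hy
    exact hmin y hy

/-- strictly increasing chains `a, nxt a, nxt (nxt a), ...` -/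
noncomputable def chain (s : α → α → Prop) [IsWellOrder α s] (a : α) : ℕ → α :=
  fun k => (nxt s)^[k] a

lemma chain_zero (a : α) : chain r a 0 = a := rfl

lemma chain_succ (a : α) (k : ℕ) : chain r a (k+1) = nxt r (chain r a k) := by
  simp [chain, Function.iterate_succ_apply']

lemma chain_mov {a : α} (h : mov r a) (k : ℕ) :
    mov r (chain r a k) ∧ tl r (chain r a (k+1)) = tl r (chain r a k) \ {chain r a k} := by
  induction k with
  | zero =>
    refine ⟨h, ?_⟩
    rw [chain_succ, chain_zero]
    exact (nxt_spec h).2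
  | succ k ih =>
    have hmovk : mov r (chain r a (k+1)) := by
      rw [mov, ih.2]
      exact ih.1.diff (Set.finite_singleton _)
    refine ⟨hmovk, ?_⟩
    rw [chain_succ (a := a) (k := k+1)]
    exact (nxt_spec hmovk).2

lemma chain_lt_succ {a : α} (h : mov r a) (k : ℕ) :
    r (chain r a k) (chain r a (k+1)) := by
  rw [chain_succ]
  exact (nxt_spec (chain_mov h k).1).1

lemma chain_lt {a : α} (h : mov r a) {k l : ℕ} (hkl : k < l) :
    r (chain r a k) (chain r a l) := by
  induction l with
  | zero => omega
  | succ l ih =>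
    rcases Nat.lt_succ_iff_lt_or_eq.1 hkl with h' | h'
    · exact trans_of r (ih h') (chain_lt_succ h l)
    · exact h' ▸ chain_lt_succ h l

lemma chain_mem_tl {a : α} (h : mov r a) (k : ℕ) : chain r a k ∈ tl r a := by
  cases k with
  | zero => exact mem_tl_self a
  | succ k => exact mem_tl_iff.2 (Or.inr (chain_lt h (Nat.succ_pos k)))

lemma chain_injective {a : α} (h : mov r a) : Function.Injective (chain r a) := by
  intro k l hkl
  by_contra hne
  rcases Nat.lt_or_ge k l with h' | h'
  · exact irrefl_of r _ (hkl ▸ chain_lt h h')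
  · have : l < k := by omega
    exact irrefl_of r _ (hkl ▸ chain_lt h this)

/-- the key minimality property: anything above `chain k` not in the chain is above
`chain (k+1)`. -/
lemma chain_min {a : α} (h : mov r a) {k : ℕ} {y : α}
    (hy : y ∈ tl r (chain r a k)) (hyk : y ≠ chain r a k) (hy2 : y ∉ Set.range (chain r a)) :
    y ∈ tl r (chain r a (k+1)) := by
  rw [(chain_mov h k).2]
  exact ⟨hy, hyk⟩

lemma delta_nxt {a : α} (h : mov r a) : δ r (nxt r a) = δ r a := by
  have hmem : nxt r a ∈ tl r a := mem_tl_iff.2 (Or.inr (nxt_spec h).1)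
  refine le_antisymm (delta_le_of_mem hmem) ?_
  -- build an embedding of `tl a` into `tl (nxt a)` by shifting the chain
  refine (Ordinal.type_le_iff').2 ⟨?_⟩
  classical
  have hn1 : nxt r a = chain r a 1 := (chain_succ a 0).symm
  -- the underlying function
  set f : α → α := fun y => if h' : ∃ k, y = chain r a k then chain r a (h'.choose + 1) else y
    with hf
  have hfc : ∀ k, f (chain r a k) = chain r a (k + 1) := by
    intro k
    have h' : ∃ l, chain r a k = chain r a l := ⟨k, rfl⟩
    rw [hf]
    simp only [dif_pos h']
    have := h'.choose_spec
    have : h'.choose = k := (chain_injective h this.symm)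
    rw [this]
  have hfnc : ∀ y, y ∉ Set.range (chain r a) → f y = y := by
    intro y hy
    have h' : ¬ ∃ k, y = chain r a k := by
      intro ⟨k, hk⟩
      exact hy ⟨k, hk.symm⟩
    rw [hf]; simp only [dif_neg h']
  have hmemf : ∀ y ∈ tl r a, f y ∈ tl r (nxt r a) := by
    intro y hy
    by_cases h' : y ∈ Set.range (chain r a)
    · obtain ⟨k, rfl⟩ := h'
      rw [hfc, hn1]
      cases k with
      | zero => exact mem_tl_self _
      | succ k => exact mem_tl_iff.2 (Or.inr (chain_lt h (by omega)))
    · rw [hfnc y h', hn1, (chain_mov h 0).2, chain_zero]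
      refine ⟨hy, ?_⟩
      rintro rfl
      exact h' ⟨0, rfl⟩
  have hmono : ∀ y z, y ∈ tl r a → z ∈ tl r a → r y z → r (f y) (f z) := by
    intro y z _ _ hyz
    by_cases h1 : y ∈ Set.range (chain r a) <;> by_cases h2 : z ∈ Set.range (chain r a)
    · obtain ⟨k, rfl⟩ := h1; obtain ⟨l, rfl⟩ := h2
      rw [hfc, hfc]
      have hkl : k < l := by
        rcases Nat.lt_trichotomy k l with h' | h' | h'
        · exact h'
        · exact absurd (h' ▸ hyz) (irrefl_of r _)
        · exact absurd (trans_of r hyz (chain_lt h h')) (irrefl_of r _)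
      exact chain_lt h (by omega)
    · obtain ⟨k, rfl⟩ := h1
      rw [hfc, hfnc z h2]
      -- z is above chain k, not in range, hence above chain (k+1)
      have hz : z ∈ tl r (chain r a (k+1)) :=
        chain_min h (mem_tl_iff.2 (Or.inr hyz)) (fun h' => (irrefl_of r _) (h' ▸ hyz)) h2
      rcases mem_tl_iff.1 hz with h' | h'
      · exact absurd h' (fun hh => h2 ⟨k+1, hh.symm⟩)
      · exact h'
    · obtain ⟨l, rfl⟩ := h2
      rw [hfnc y h1, hfc]
      exact trans_of r hyz (chain_lt_succ h l)
    · rw [hfnc y h1, hfnc z h2]; exact hyz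
  -- assemble the RelEmbedding
  refine ⟨⟨fun y => ⟨f y.1, hmemf y.1 y.2⟩, ?_⟩, ?_⟩
  · intro y z hyz
    have hfe : f y.1 = f z.1 := congrArg Subtype.val hyz
    rcases trichotomous_of r y.1 z.1 with h' | h' | h'
    · have := hmono y.1 z.1 y.2 z.2 h'
      rw [hfe] at this
      exact absurd this (irrefl_of r _)
    · exact Subtype.ext h'
    · have := hmono z.1 y.1 z.2 y.2 h'
      rw [hfe] at this
      exact absurd this (irrefl_of r _)
  · intro y z
    constructor
    · intro hfyz
      have hfyz' : r (f y.1) (f z.1) := hfyz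
      rcases trichotomous_of r y.1 z.1 with h' | h' | h'
      · exact h'
      · rw [h'] at hfyz'
        exact absurd hfyz' (irrefl_of r _)
      · exact absurd hfyz' (asymm_of r (hmono z.1 y.1 z.2 y.2 h'))
    · exact fun hyz => hmono y.1 z.1 y.2 z.2 hyz

lemma exists_gt_delta_eq {a : α} (h : mov r a) :
    ∃ b : α, r a b ∧ δ r b = δ r a :=
  ⟨nxt r a, (nxt_spec h).1, delta_nxt h⟩

lemma no_descending (u : ℕ → α) (hu : ∀ n, r (u (n+1)) (u n)) : False := by
  obtain ⟨n, hn⟩ := (IsWellFounded.wf (r := r)).min_mem (Set.range u) ⟨u 0, ⟨0, rfl⟩⟩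
  exact (IsWellFounded.wf (r := r)).not_lt_min (Set.range u)
    ⟨n+1, rfl⟩ (hn ▸ hu n)

lemma exists_strictMono_ordinal {S : Set Ordinal} (hS : S.Infinite) :
    ∃ u : ℕ → Ordinal, (∀ n, u n ∈ S) ∧ StrictMono u := by
  let T : ℕ → Set Ordinal := fun n => Nat.rec S (fun _ t => t \ {sInf t}) n
  have hT0 : T 0 = S := rfl
  have hTsucc : ∀ n, T (n+1) = T n \ {sInf (T n)} := fun n => rfl
  have hTinf : ∀ n, (T n).Infinite := by
    intro n
    induction n with
    | zero => exact hS
    | succ n ih => rw [hTsucc]; exact ih.diff (Set.finite_singleton _)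
  have hTsub : ∀ n, T n ⊆ S := by
    intro n
    induction n with
    | zero => exact subset_rfl
    | succ n ih => rw [hTsucc]; exact (Set.diff_subset).trans ih
  refine ⟨fun n => sInf (T n), fun n => hTsub n (csInf_mem (hTinf n).nonempty), ?_⟩
  have hstep : ∀ n, sInf (T n) < sInf (T (n+1)) := by
    intro n
    have hmem : sInf (T (n+1)) ∈ T (n+1) := csInf_mem (hTinf (n+1)).nonempty
    rw [hTsucc] at hmem
    exact lt_of_le_of_ne (csInf_le' hmem.1) (fun h => hmem.2 h.symm)
  exact strictMono_nat_of_lt_succ hstep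

lemma range_delta_finite : (Set.range (δ r)).Finite := by
  by_contra hinf
  rw [← Set.Infinite] at hinf
  obtain ⟨u, humem, humono⟩ := exists_strictMono_ordinal hinf
  have hpre : ∀ n, ∃ a : α, δ r a = u n := humem
  choose a ha using hpre
  refine no_descending (r := r) a (fun n => ?_)
  rcases trichotomous_of r (a (n+1)) (a n) with h' | h' | h'
  · exact h'
  · exfalso
    have := humono (Nat.lt_succ_self n)
    rw [← ha n, ← ha (n+1), h'] at this
    exact lt_irrefl _ this
  · exfalso
    have hle : δ r (a (n+1)) ≤ δ r (a n) := delta_le_of_mem (mem_tl_iff.2 (Or.inr h'))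
    have := humono (Nat.lt_succ_self n)
    rw [← ha n, ← ha (n+1)] at this
    exact absurd this (not_lt_of_ge hle)

lemma immov_finite : {a : α | ¬ mov r a}.Finite := by
  rcases Set.eq_empty_or_nonempty {a : α | ¬ mov r a} with h | h
  · rw [h]; exact Set.finite_empty
  · obtain ⟨t0, ht0⟩ := h
    have hmin : ∀ b ∈ {a : α | ¬ mov r a}, ¬ r b ((IsWellFounded.wf (r := r)).min _ ⟨t0, ht0⟩) :=
      fun b hb => (IsWellFounded.wf (r := r)).not_lt_min _ hb
    have hminmem := (IsWellFounded.wf (r := r)).min_mem {a : α | ¬ mov r a} ⟨t0, ht0⟩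
    have hsub : {a : α | ¬ mov r a} ⊆ tl r ((IsWellFounded.wf (r := r)).min _ ⟨t0, ht0⟩) :=
      fun b hb => hmin b hb
    exact Set.Finite.subset (Set.not_infinite.1 hminmem) hsub

variable (r)

/-- canonical representative (minimum) of the `δ`-class of `a`. -/
noncomputable def minCls (a : α) : α :=
  (IsWellFounded.wf (r := r)).min {b | δ r b = δ r a} ⟨a, rfl⟩

variable {r}

lemma delta_minCls (a : α) : δ r (minCls r a) = δ r a :=
  (IsWellFounded.wf (r := r)).min_mem {b | δ r b = δ r a} ⟨a, rfl⟩

lemma minCls_congr {a b : α} (h : δ r a = δ r b) : minCls r a = minCls r b := by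
  unfold minCls
  congr 1
  rw [h]

lemma range_minCls_finite : (Set.range (minCls r)).Finite := by
  have hinj : Set.InjOn (δ r) (Set.range (minCls r)) := by
    rintro x ⟨a, rfl⟩ y ⟨b, rfl⟩ hxy
    rw [delta_minCls, delta_minCls] at hxy
    exact minCls_congr hxy
  exact Set.Finite.of_finite_image ((range_delta_finite).subset (Set.image_subset_range _ _)) hinj

section Phi

variable {p q : α}

lemma iso_min (j : Subrel r (· ∈ tl r p) ≃r Subrel r (· ∈ tl r q)) :
    (j ⟨p, mem_tl_self p⟩).1 = q := by
  set z := j ⟨p, mem_tl_self p⟩ with hz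
  rcases mem_tl_iff.1 z.2 with h' | h'
  · exact h'
  · exfalso
    set y := j.symm ⟨q, mem_tl_self q⟩ with hy
    rcases mem_tl_iff.1 y.2 with h'' | h''
    · -- y = p, so j p = q, contradicting r q z
      have : j y = ⟨q, mem_tl_self q⟩ := j.apply_symm_apply _
      have hyp : y = ⟨p, mem_tl_self p⟩ := Subtype.ext h''
      rw [hyp] at this
      rw [← hz] at this
      rw [this] at h'
      exact irrefl_of r q h'
    · -- r p y, apply j : get r z q, contradiction
      have hrel : Subrel r (· ∈ tl r p) ⟨p, mem_tl_self p⟩ y := h''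
      have := j.map_rel_iff.2 hrel
      have hjy : j y = ⟨q, mem_tl_self q⟩ := j.apply_symm_apply _
      rw [hjy] at this
      have hzq : r z.1 q := this
      exact z.2 hzq

/-- restriction of a tail isomorphism to the tail above a point. -/
noncomputable def isoTail (j : Subrel r (· ∈ tl r p) ≃r Subrel r (· ∈ tl r q)) (x : tl r p) :
    Subrel r (· ∈ tl r x.1) ≃r Subrel r (· ∈ tl r (j x).1) := by
  refine RelIso.mk (Equiv.mk
    (fun y => ⟨(j ⟨y.1, mem_tl_of_mem_tl x.2 y.2⟩).1, ?_⟩)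
    (fun z => ⟨(j.symm ⟨z.1, mem_tl_of_mem_tl (j x).2 z.2⟩).1, ?_⟩) ?_ ?_) ?_
  · intro hr
    have h1 : Subrel r (· ∈ tl r q) (j ⟨y.1, mem_tl_of_mem_tl x.2 y.2⟩) (j x) := hr
    exact y.2 (j.map_rel_iff.1 h1)
  · intro hr
    have h1 : Subrel r (· ∈ tl r p) (j.symm ⟨z.1, mem_tl_of_mem_tl (j x).2 z.2⟩) x := hr
    have h2 := j.map_rel_iff.2 h1
    rw [j.apply_symm_apply] at h2
    exact z.2 h2
  · intro y
    apply Subtype.ext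
    simp only [Subtype.coe_eta, RelIso.symm_apply_apply]
  · intro z
    apply Subtype.ext
    simp only [Subtype.coe_eta, RelIso.apply_symm_apply]
  · intro y z
    exact j.map_rel_iff (a := ⟨y.1, _⟩) (b := ⟨z.1, _⟩)

open Classical in
/-- the order embedding of the whole order determined by a tail isomorphism:
identity below `p`, the isomorphism above. -/
noncomputable def phi (j : Subrel r (· ∈ tl r p) ≃r Subrel r (· ∈ tl r q)) : α → α :=
  fun x => if h : x ∈ tl r p then (j ⟨x, h⟩).1 else x

lemma phi_apply (j : Subrel r (· ∈ tl r p) ≃r Subrel r (· ∈ tl r q)) {x : α} (h : x ∈ tl r p) :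
    phi j x = (j ⟨x, h⟩).1 := dif_pos h

lemma phi_of_not_mem (j : Subrel r (· ∈ tl r p) ≃r Subrel r (· ∈ tl r q)) {x : α}
    (h : x ∉ tl r p) : phi j x = x := dif_neg h

lemma phi_base (j : Subrel r (· ∈ tl r p) ≃r Subrel r (· ∈ tl r q)) : phi j p = q := by
  rw [phi_apply j (mem_tl_self p), iso_min]

lemma phi_mem_tl (j : Subrel r (· ∈ tl r p) ≃r Subrel r (· ∈ tl r q)) {x : α} (h : x ∈ tl r p) :
    phi j x ∈ tl r q := by
  rw [phi_apply j h]
  exact (j ⟨x, h⟩).2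

lemma phi_mono (j : Subrel r (· ∈ tl r p) ≃r Subrel r (· ∈ tl r q)) (hq : q ∈ tl r p)
    {a b : α} (hab : r a b) : r (phi j a) (phi j b) := by
  by_cases ha : a ∈ tl r p <;> by_cases hb : b ∈ tl r p
  · rw [phi_apply j ha, phi_apply j hb]
    have hrel : Subrel r (· ∈ tl r p) ⟨a, ha⟩ ⟨b, hb⟩ := hab
    exact j.map_rel_iff.2 hrel
  · exact absurd (trans_of r hab (not_mem_tl_iff.1 hb)) ha
  · rw [phi_of_not_mem j ha]
    have hap : r a p := not_mem_tl_iff.1 ha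
    have h1 : phi j b ∈ tl r q := phi_mem_tl j hb
    have h2 : phi j b ∈ tl r p := mem_tl_of_mem_tl hq h1
    rcases mem_tl_iff.1 h2 with h' | h'
    · rw [h']
      exact hap
    · exact trans_of r hap h'
  · rw [phi_of_not_mem j ha, phi_of_not_mem j hb]
    exact hab

lemma phi_inj (j : Subrel r (· ∈ tl r p) ≃r Subrel r (· ∈ tl r q)) (hq : q ∈ tl r p) :
    Function.Injective (phi j) := by
  intro a b hab
  rcases trichotomous_of r a b with h' | h' | h'
  · exact absurd (hab ▸ phi_mono j hq h') (irrefl_of r _)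
  · exact h'
  · exact absurd (hab ▸ phi_mono j hq h') (irrefl_of r _)

lemma phi_delta (j : Subrel r (· ∈ tl r p) ≃r Subrel r (· ∈ tl r q)) {x : α} :
    δ r (phi j x) = δ r x := by
  by_cases h : x ∈ tl r p
  · rw [phi_apply j h]
    exact (Ordinal.type_eq.2 ⟨isoTail j ⟨x, h⟩⟩).symm
  · rw [phi_of_not_mem j h]

lemma phi_fix_immov (j : Subrel r (· ∈ tl r p) ≃r Subrel r (· ∈ tl r q)) {x : α}
    (h : ¬ mov r x) : phi j x = x :=
  eq_of_delta_eq_of_not_mov (phi_delta j (x := x)) (fun hm => h ((mov_congr (phi_delta j)).1 hm))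

end Phi

section RMax

open Classical in
noncomputable def rmax (a b : α) : α := if r a b then b else a

lemma rmax_mem_tl_left (a b : α) : rmax (r := r) a b ∈ tl r a := by
  unfold rmax
  split
  · exact mem_tl_iff.2 (Or.inr (by assumption))
  · exact mem_tl_self a

lemma rmax_mem_tl_right (a b : α) : rmax (r := r) a b ∈ tl r b := by
  unfold rmax
  split
  · exact mem_tl_self b
  · next h =>
    rcases trichotomous_of r a b with h' | h' | h'
    · exact absurd h' h
    · exact mem_tl_iff.2 (Or.inl h')
    · exact mem_tl_iff.2 (Or.inr h')

lemma rmax_delta {a b : α} (h : δ r a = δ r b) : δ r (rmax (r := r) a b) = δ r a := by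
  unfold rmax
  split
  · exact h.symm
  · rfl

end RMax


section ModuleBasics

variable {L : FirstOrder.Language} {M : Type} [L.Structure M] {F : Type} [Field F]

lemma coe_refl_eq_id : ((FirstOrder.Language.Equiv.refl L M : M ≃[L] M) : M → M) = id :=
  funext (fun x => FirstOrder.Language.Equiv.refl_apply x)

lemma mapDomain_refl (w : M →₀ F) :
    Finsupp.mapDomain (FirstOrder.Language.Equiv.refl L M : M ≃[L] M) w = w := by
  rw [coe_refl_eq_id, Finsupp.mapDomain_id]

lemma coe_comp_eq (g h : M ≃[L] M) : ((g.comp h : M ≃[L] M) : M → M) = ⇑g ∘ ⇑h := rfl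

lemma mem_autSpan {s : Set (M →₀ F)} {w : M →₀ F} (hw : w ∈ s) : w ∈ autSpan L F s :=
  Submodule.subset_span ⟨FirstOrder.Language.Equiv.refl L M, w, hw, (mapDomain_refl w).symm⟩

lemma autSpan_mono {s t : Set (M →₀ F)} (hst : s ⊆ t) : autSpan L F s ≤ autSpan L F t := by
  apply Submodule.span_mono
  rintro w ⟨g, v, hv, rfl⟩
  exact ⟨g, v, hst hv, rfl⟩

lemma span_mapDomain_closed {s : Set (M →₀ F)}
    (hs : ∀ (g : M ≃[L] M), ∀ w ∈ s, Finsupp.mapDomain ⇑g w ∈ s)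
    (g : M ≃[L] M) {w : M →₀ F} (hw : w ∈ Submodule.span F s) :
    Finsupp.mapDomain ⇑g w ∈ Submodule.span F s := by
  have h1 : Finsupp.mapDomain ⇑g w = Finsupp.lmapDomain F F ⇑g w := rfl
  rw [h1]
  have h2 : Submodule.map (Finsupp.lmapDomain F F ⇑g) (Submodule.span F s) ≤
      Submodule.span F s := by
    rw [Submodule.map_span]
    apply Submodule.span_mono
    rintro x ⟨y, hy, rfl⟩
    exact hs g y hy
  exact h2 ⟨w, hw, rfl⟩

lemma mapDomain_mem_autSpan {s : Set (M →₀ F)} {w : M →₀ F}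
    (hw : w ∈ autSpan L F s) (g : M ≃[L] M) :
    Finsupp.mapDomain ⇑g w ∈ autSpan L F s := by
  refine span_mapDomain_closed ?_ g hw
  rintro g' w' ⟨h, v, hv, rfl⟩
  refine ⟨g'.comp h, v, hv, ?_⟩
  rw [coe_comp_eq, Finsupp.mapDomain_comp]

lemma autSpan_le {s : Set (M →₀ F)} {N : Submodule F (M →₀ F)}
    (h : ∀ (g : M ≃[L] M), ∀ w ∈ s, Finsupp.mapDomain ⇑g w ∈ N) :
    autSpan L F s ≤ N := by
  rw [autSpan, Submodule.span_le]
  rintro x ⟨g, v, hv, rfl⟩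
  exact h g v hv

lemma mapDomain_eq_sum (u : M → M) (w : M →₀ F) :
    Finsupp.mapDomain u w = ∑ x ∈ w.support, Finsupp.single (u x) (w x) :=
  rfl

lemma mapDomain_sub_mapDomain (u₁ u₂ : M → M) (w : M →₀ F) :
    Finsupp.mapDomain u₁ w - Finsupp.mapDomain u₂ w =
      ∑ x ∈ w.support, (Finsupp.single (u₁ x) (w x) - Finsupp.single (u₂ x) (w x)) := by
  rw [mapDomain_eq_sum, mapDomain_eq_sum, Finset.sum_sub_distrib]

lemma mapDomain_neg (u : M → M) (w : M →₀ F) :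
    Finsupp.mapDomain u (-w) = - Finsupp.mapDomain u w := by
  have h1 : ∀ y, Finsupp.mapDomain u y = Finsupp.lmapDomain F F u y := fun _ => rfl
  rw [h1, h1, map_neg]

lemma mapDomain_sub (u : M → M) (w₁ w₂ : M →₀ F) :
    Finsupp.mapDomain u (w₁ - w₂) = Finsupp.mapDomain u w₁ - Finsupp.mapDomain u w₂ := by
  have h1 : ∀ y, Finsupp.mapDomain u y = Finsupp.lmapDomain F F u y := fun _ => rfl
  rw [h1, h1, h1, map_sub]

end ModuleBasics


section Core

variable {L : FirstOrder.Language} {M : Type} [L.Structure M]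

variable (L) {A : Set M} (r : ↥A → ↥A → Prop) [IsWellOrder ↥A r] (F : Type) [Field F]

/-- The submodule generated by the `G`-orbit of a pair difference in the `δ`-class
of `a`. -/
noncomputable def DD (a : ↥A) : Submodule F (M →₀ F) :=
  Submodule.span F {w | ∃ (g : M ≃[L] M) (u u' : ↥A), δ r u = δ r a ∧ δ r u' = δ r a ∧
      w = Finsupp.mapDomain ⇑g (Finsupp.single (u : M) (1:F) - Finsupp.single (u' : M) (1:F))}

open Classical in
/-- collapse map: send each movable point of `A` to the minimum of its class. -/
noncomputable def mu : M → M :=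
  fun x => if hx : x ∈ A then (if mov r ⟨x, hx⟩ then ↑(minCls r ⟨x, hx⟩) else x) else x

variable {L r F}

lemma mu_of_movable {x : M} (hx : x ∈ A) (hm : mov r ⟨x, hx⟩) :
    mu (A := A) r x = ↑(minCls r ⟨x, hx⟩) := by
  rw [mu, dif_pos hx, if_pos hm]

lemma mu_of_immovable {x : M} (hx : x ∈ A) (hm : ¬ mov r ⟨x, hx⟩) :
    mu (A := A) r x = x := by
  rw [mu, dif_pos hx, if_neg hm]

lemma mu_of_not_mem {x : M} (hx : x ∉ A) : mu (A := A) r x = x := by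
  rw [mu, dif_neg hx]

lemma DD_congr {a b : ↥A} (h : δ r a = δ r b) : DD L r F a = DD L r F b := by
  unfold DD
  rw [h]

lemma mapDomain_mem_DD {a : ↥A} {w : M →₀ F} (hw : w ∈ DD L r F a) (g : M ≃[L] M) :
    Finsupp.mapDomain ⇑g w ∈ DD L r F a := by
  refine span_mapDomain_closed ?_ g hw
  rintro g' w' ⟨h, u, u', hu, hu', rfl⟩
  refine ⟨g'.comp h, u, u', hu, hu', ?_⟩
  rw [coe_comp_eq, Finsupp.mapDomain_comp]

lemma smul_pair_mem_DD {a u u' : ↥A} (hu : δ r u = δ r a) (hu' : δ r u' = δ r a) (c : F) :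
    c • (Finsupp.single (u : M) (1:F) - Finsupp.single (u' : M) 1) ∈ DD L r F a := by
  refine Submodule.smul_mem _ c (Submodule.subset_span ?_)
  exact ⟨FirstOrder.Language.Equiv.refl L M, u, u', hu, hu', (mapDomain_refl _).symm⟩

lemma sub_red_mem {w : M →₀ F} (hw : ↑w.support ⊆ A) {N : Submodule F (M →₀ F)}
    (hN : ∀ a : ↥A, (a : M) ∈ w.support → mov r a → DD L r F a ≤ N) :
    w - Finsupp.mapDomain (mu (A := A) r) w ∈ N := by
  have h1 : w - Finsupp.mapDomain (mu (A := A) r) w =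
      ∑ x ∈ w.support,
        (Finsupp.single x (w x) - Finsupp.single (mu (A := A) r x) (w x)) := by
    have h2 := mapDomain_sub_mapDomain id (mu (A := A) r) w
    rw [Finsupp.mapDomain_id] at h2
    simpa using h2
  rw [h1]
  apply Submodule.sum_mem
  intro x hx
  have hxA : x ∈ A := hw hx
  by_cases hm : mov r ⟨x, hxA⟩
  · rw [mu_of_movable hxA hm]
    have h2 := smul_pair_mem_DD (L := L) (a := (⟨x, hxA⟩ : ↥A)) (u := (⟨x, hxA⟩ : ↥A))
      (u' := minCls r ⟨x, hxA⟩) rfl (delta_minCls _) (w x)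
    have h3 : (w x) • (Finsupp.single ((⟨x, hxA⟩ : ↥A) : M) (1:F) -
        Finsupp.single ((minCls r ⟨x, hxA⟩ : ↥A) : M) 1) =
        Finsupp.single x (w x) - Finsupp.single ((minCls r ⟨x, hxA⟩ : ↥A) : M) (w x) := by
      rw [smul_sub, Finsupp.smul_single, Finsupp.smul_single, _root_.smul_eq_mul, mul_one]
    rw [h3] at h2
    exact hN ⟨x, hxA⟩ hx hm h2
  · rw [mu_of_immovable hxA hm]
    simp

variable (hext : ∀ f : ↥A → ↥A, Function.Injective f →
      (∀ a b : ↥A, r a b → r (f a) (f b)) →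
      ∃ g : M ≃[L] M, ∀ a : ↥A, g a = f a)

include hext

/-- two strictly ordered pairs in the same `δ`-class are conjugate. -/
lemma conj_pair {a b u u' : ↥A} (hab : r a b) (huu : r u u')
    (hua : δ r u = δ r a) (hba : δ r b = δ r a) (hu'a : δ r u' = δ r a) :
    ∃ g : M ≃[L] M,
      Finsupp.mapDomain ⇑g (Finsupp.single (a : M) (1:F) - Finsupp.single (b : M) 1) =
        Finsupp.single (u : M) 1 - Finsupp.single (u' : M) 1 := by
  classical
  set z₁ : ↥A := rmax (r := r) a u with hz₁def
  have hz₁a : z₁ ∈ tl r a := rmax_mem_tl_left a u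
  have hz₁u : z₁ ∈ tl r u := rmax_mem_tl_right a u
  have hδz₁ : δ r z₁ = δ r a := rmax_delta hua.symm
  let jA := tailIso (show δ r a = δ r z₁ from hδz₁.symm)
  let jU := tailIso (show δ r u = δ r z₁ from hua.trans hδz₁.symm)
  set b1 : ↥A := phi jA b with hb1def
  set u1 : ↥A := phi jU u' with hu1def
  have hz₁b1 : r z₁ b1 := by
    have := phi_mono jA hz₁a hab
    rwa [phi_base jA] at this
  have hz₁u1 : r z₁ u1 := by
    have := phi_mono jU hz₁u huu
    rwa [phi_base jU] at this
  have hδb1 : δ r b1 = δ r a := (phi_delta jA).trans hba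
  have hδu1 : δ r u1 = δ r a := (phi_delta jU).trans hu'a
  set z₂ : ↥A := rmax (r := r) b1 u1 with hz₂def
  have hz₂b1 : z₂ ∈ tl r b1 := rmax_mem_tl_left b1 u1
  have hz₂u1 : z₂ ∈ tl r u1 := rmax_mem_tl_right b1 u1
  have hδz₂ : δ r z₂ = δ r b1 := rmax_delta (hδb1.trans hδu1.symm)
  let jB := tailIso (show δ r b1 = δ r z₂ from hδz₂.symm)
  let jV := tailIso (show δ r u1 = δ r z₂ from hδu1.trans (hδz₂.trans hδb1).symm)
  -- the two composite embeddings
  set f1 : ↥A → ↥A := (phi jB) ∘ (phi jA) with hf1def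
  set f2 : ↥A → ↥A := (phi jV) ∘ (phi jU) with hf2def
  have hf1inj : Function.Injective f1 := (phi_inj jB hz₂b1).comp (phi_inj jA hz₁a)
  have hf2inj : Function.Injective f2 := (phi_inj jV hz₂u1).comp (phi_inj jU hz₁u)
  have hf1mono : ∀ x y : ↥A, r x y → r (f1 x) (f1 y) :=
    fun x y hxy => phi_mono jB hz₂b1 (phi_mono jA hz₁a hxy)
  have hf2mono : ∀ x y : ↥A, r x y → r (f2 x) (f2 y) :=
    fun x y hxy => phi_mono jV hz₂u1 (phi_mono jU hz₁u hxy)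
  obtain ⟨g₁, hg₁⟩ := hext f1 hf1inj hf1mono
  obtain ⟨g₂, hg₂⟩ := hext f2 hf2inj hf2mono
  have hf1a : f1 a = z₁ := by
    rw [hf1def, Function.comp_apply, phi_base jA, phi_of_not_mem jB (not_mem_tl_iff.2 hz₁b1)]
  have hf1b : f1 b = z₂ := by
    rw [hf1def, Function.comp_apply, ← hb1def, phi_base jB]
  have hf2u : f2 u = z₁ := by
    rw [hf2def, Function.comp_apply, phi_base jU, phi_of_not_mem jV (not_mem_tl_iff.2 hz₁u1)]
  have hf2u' : f2 u' = z₂ := by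
    rw [hf2def, Function.comp_apply, ← hu1def, phi_base jV]
  have key : Finsupp.mapDomain ⇑g₁ (Finsupp.single (a : M) (1:F) - Finsupp.single (b : M) 1) =
      Finsupp.mapDomain ⇑g₂ (Finsupp.single (u : M) 1 - Finsupp.single (u' : M) 1) := by
    rw [mapDomain_sub, mapDomain_sub, Finsupp.mapDomain_single, Finsupp.mapDomain_single,
      Finsupp.mapDomain_single, Finsupp.mapDomain_single, hg₁ a, hg₁ b, hg₂ u, hg₂ u',
      hf1a, hf1b, hf2u, hf2u']
  refine ⟨g₂.symm.comp g₁, ?_⟩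
  rw [coe_comp_eq, Finsupp.mapDomain_comp, key, ← Finsupp.mapDomain_comp]
  have hco : (⇑g₂.symm ∘ ⇑g₂ : M → M) = id := funext (fun x => g₂.symm_apply_apply x)
  rw [hco, Finsupp.mapDomain_id]

/-- Key lemma: if the `δ`-class of a movable point `a` meets the support of `w`, then the
difference module `DD a` is contained in the automorphic span of `w`. -/
lemma DD_le_autSpan (w : M →₀ F) (hw : ↑w.support ⊆ A) {a0 : ↥A}
    (ha0 : (a0 : M) ∈ w.support) (hmov0 : mov r a0) :
    DD L r F a0 ≤ autSpan L F {w} := by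
  classical
  set S := autSpan L F {w} with hSdef
  let meas : ↥A → ℕ := fun x =>
    ((w.support : Set M) ∩ {y | ∃ hy : y ∈ A, mov r ⟨y, hy⟩ ∧ δ r ⟨y, hy⟩ < δ r x}).ncard
  letI : LinearOrder ↥A := IsWellOrder.linearOrder r
  have hltr : ∀ x y : ↥A, x < y ↔ r x y := fun _ _ => Iff.rfl
  have hwS : w ∈ S := mem_autSpan rfl
  suffices main : ∀ k : ℕ, ∀ a : ↥A, (a : M) ∈ w.support → mov r a → meas a ≤ k →
      DD L r F a ≤ S by
    exact main (meas a0) a0 ha0 hmov0 le_rfl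
  intro k
  induction k using Nat.strong_induction_on with
  | _ k IH =>
    intro a ha hmova hka
    -- the set of support points in the class of `a`, and its maximum `a'`
    have hinjval : Set.InjOn (Subtype.val : ↥A → M) (Subtype.val ⁻¹' ↑w.support) :=
      Subtype.coe_injective.injOn
    set cs : Finset ↥A :=
      (w.support.preimage (Subtype.val : ↥A → M) hinjval).filter (fun x => δ r x = δ r a)
      with hcsdef
    have hmem_cs : ∀ x : ↥A, x ∈ cs ↔ ((x : M) ∈ w.support ∧ δ r x = δ r a) := by
      intro x
      rw [hcsdef, Finset.mem_filter, Finset.mem_preimage]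
    have hcs_ne : cs.Nonempty := ⟨a, (hmem_cs a).2 ⟨ha, rfl⟩⟩
    set a' : ↥A := cs.max' hcs_ne with ha'def
    have ha'cs := cs.max'_mem hcs_ne
    have ha'supp : (a' : M) ∈ w.support := ((hmem_cs a').1 ha'cs).1
    have hδa' : δ r a' = δ r a := ((hmem_cs a').1 ha'cs).2
    have hmova' : mov r a' := (mov_congr hδa').2 hmova
    obtain ⟨b, hab, hδb⟩ := exists_gt_delta_eq hmova'
    have hba' : b ∈ tl r a' := mem_tl_iff.2 (Or.inr hab)
    let j := tailIso (show δ r a' = δ r b from hδb.symm)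
    obtain ⟨g, hg⟩ := hext (phi j) (phi_inj j hba') (fun x y hxy => phi_mono j hba' hxy)
    have hXS : Finsupp.mapDomain ⇑g w - w ∈ S :=
      sub_mem (mapDomain_mem_autSpan hwS g) hwS
    have hXeq : Finsupp.mapDomain ⇑g w - w =
        ∑ x ∈ w.support, (Finsupp.single (g x) (w x) - Finsupp.single x (w x)) := by
      have h1 := mapDomain_sub_mapDomain (⇑g) id w
      rw [Finsupp.mapDomain_id] at h1
      simpa using h1
    -- each term at `x ≠ a'` already lies in `S`
    have hterm : ∀ x ∈ w.support, x ≠ (a' : M) →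
        Finsupp.single (g x) (w x) - Finsupp.single x (w x) ∈ S := by
      intro x hx hxa
      have hxA : x ∈ A := hw hx
      set xA : ↥A := ⟨x, hxA⟩ with hxAdef
      have hgx : g x = ↑(phi j xA) := hg xA
      by_cases hmem : xA ∈ tl r a'
      · have hne' : xA ≠ a' := fun h => hxa (congrArg Subtype.val h)
        have hra'x : r a' xA := by
          rcases mem_tl_iff.1 hmem with h' | h'
          · exact absurd h' hne'
          · exact h'
        have hlt : δ r xA < δ r a := by
          have hle : δ r xA ≤ δ r a' := delta_le_of_mem hmem
          have hne2 : δ r xA ≠ δ r a' := by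
            intro heq
            have hxcs : xA ∈ cs := (hmem_cs xA).2 ⟨hx, heq.trans hδa'⟩
            have := cs.le_max' xA hxcs
            rw [← ha'def] at this
            exact absurd ((hltr a' xA).2 hra'x) (not_lt_of_ge this)
          rw [← hδa']
          exact lt_of_le_of_ne hle hne2
        by_cases hmv : mov r xA
        · -- the term lies in `DD xA ≤ S` by induction
          have hterm_mem : Finsupp.single (↑(phi j xA) : M) (w x) - Finsupp.single x (w x)
              ∈ DD L r F xA := by
            have h2 := smul_pair_mem_DD (L := L) (a := xA) (u := phi j xA) (u' := xA)
              (phi_delta j) rfl (w x)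
            have h3 : (w x) • (Finsupp.single (↑(phi j xA) : M) (1:F) -
                Finsupp.single (↑xA : M) 1) =
                Finsupp.single (↑(phi j xA) : M) (w x) - Finsupp.single x (w x) := by
              rw [smul_sub, Finsupp.smul_single, Finsupp.smul_single, _root_.smul_eq_mul, mul_one]
            rwa [h3] at h2
          have hmeas : meas xA < meas a := by
            apply Set.ncard_lt_ncard
            · constructor
              · apply Set.inter_subset_inter_right
                intro y hy
                obtain ⟨hyA, hymov, hylt⟩ := hy
                exact ⟨hyA, hymov, hylt.trans hlt⟩
              · intro hsub
                have hxin : x ∈ (w.support : Set M) ∩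
                    {y | ∃ hy : y ∈ A, mov r ⟨y, hy⟩ ∧ δ r ⟨y, hy⟩ < δ r a} :=
                  ⟨hx, hxA, hmv, hlt⟩
                obtain ⟨-, hyA, -, hylt⟩ := hsub hxin
                exact absurd hylt (lt_irrefl _)
            · exact (w.support.finite_toSet).inter_of_left _
          have hDDle : DD L r F xA ≤ S := IH (meas xA) (lt_of_lt_of_le hmeas hka) xA hx hmv le_rfl
          rw [hgx]
          exact hDDle hterm_mem
        · rw [hgx, phi_fix_immov j hmv]
          have hxx : ((xA : M)) = x := rfl
          rw [hxx]
          simp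
      · rw [hgx, phi_of_not_mem j hmem]
        have hxx : ((xA : M)) = x := rfl
        rw [hxx]
        simp
    -- extract the term at `a'`
    have hsplit : Finsupp.single (g ↑a') (w ↑a') - Finsupp.single (↑a' : M) (w ↑a') ∈ S := by
      have h1 : (Finsupp.single (g ↑a') (w ↑a') - Finsupp.single (↑a' : M) (w ↑a')) +
          ∑ x ∈ w.support.erase ↑a',
            (Finsupp.single (g x) (w x) - Finsupp.single x (w x)) =
          Finsupp.mapDomain ⇑g w - w := by
        rw [hXeq]
        exact Finset.add_sum_erase _ _ ha'supp
      have h2 : ∑ x ∈ w.support.erase ↑a',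
          (Finsupp.single (g x) (w x) - Finsupp.single x (w x)) ∈ S := by
        apply Submodule.sum_mem
        intro x hxe
        exact hterm x (Finset.mem_of_mem_erase hxe) (Finset.ne_of_mem_erase hxe)
      have h3 : Finsupp.single (g ↑a') (w ↑a') - Finsupp.single (↑a' : M) (w ↑a') =
          (Finsupp.mapDomain ⇑g w - w) - ∑ x ∈ w.support.erase ↑a',
            (Finsupp.single (g x) (w x) - Finsupp.single x (w x)) := by
        rw [← h1]
        abel
      rw [h3]
      exact sub_mem hXS h2
    have hga' : g ↑a' = ↑b := by rw [hg a', phi_base j]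
    have hc : w ↑a' ≠ 0 := Finsupp.mem_support_iff.1 ha'supp
    have hpair : Finsupp.single (↑a' : M) (1:F) - Finsupp.single (↑b : M) 1 ∈ S := by
      rw [hga'] at hsplit
      have h2 : Finsupp.single (↑a' : M) (1:F) - Finsupp.single (↑b : M) 1 =
          (-(w ↑a')⁻¹) • (Finsupp.single (↑b : M) (w ↑a') -
            Finsupp.single (↑a' : M) (w ↑a')) := by
        simp only [smul_sub, Finsupp.smul_single, _root_.smul_eq_mul, neg_mul,
          inv_mul_cancel₀ hc, Finsupp.single_neg]
        abel
      rw [h2]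
      exact Submodule.smul_mem _ _ hsplit
    -- conclude : all generators of `DD a = DD a'` are in `S`
    rw [show DD L r F a = DD L r F a' from DD_congr hδa'.symm]
    rw [DD, Submodule.span_le]
    rintro x ⟨g0, u, u', hu, hu', rfl⟩
    rcases trichotomous_of r u u' with h' | h' | h'
    · obtain ⟨g', hg'⟩ := conj_pair (F := F) hext hab h' hu hδb hu'
      rw [← hg']
      exact mapDomain_mem_autSpan (mapDomain_mem_autSpan hpair g') g0
    · rw [h', _root_.sub_self, Finsupp.mapDomain_zero]
      exact Submodule.zero_mem S
    · obtain ⟨g', hg'⟩ := conj_pair (F := F) hext hab h' hu' hδb hu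
      have h9 : Finsupp.single (↑u : M) (1:F) - Finsupp.single (↑u' : M) 1 =
          Finsupp.mapDomain ⇑g'
            (-(Finsupp.single (↑a' : M) (1:F) - Finsupp.single (↑b : M) 1)) := by
        rw [mapDomain_neg, hg']
        abel
      rw [h9]
      exact mapDomain_mem_autSpan (mapDomain_mem_autSpan (neg_mem hpair) g') g0

end Core

end Stmt14Aux

open Stmt14Aux

/-- special case of Theorem 3.3. Let `M` be a countably
infinite `ω`-categorical structure, `F` a field, and `A ⊆ M` a subset carrying
a well-order `r` such that `(A, r)` is order-indiscernible in `M` and every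
`r`-preserving injection `A → A` extends to an automorphism of `M`.  Then `A`
cannot be the union of the supports of a set `{v i}` of elements of the
permutation module `F M` generating an `F Aut(M)`-submodule that is not
finitely generated (i.e. with `⟨v₀, v₁, …⟩ ≠ ⟨v₀, …, v_{i-1}⟩` for all `i`). -/
theorem stmt14 {L : FirstOrder.Language} {M : Type} [L.Structure M]
    [Countable M] [Infinite M]
    (hcat : Cardinal.aleph0.Categorical (L.completeTheory M))
    {F : Type} [Field F]
    (A : Set M) (r : A → A → Prop) (hwo : IsWellOrder A r)
    (hindisc : ∀ (n : ℕ) (x y : Fin n → A),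
      (∀ i j : Fin n, i < j → r (x i) (x j)) →
      (∀ i j : Fin n, i < j → r (y i) (y j)) →
      ∀ φ : L.Formula (Fin n),
        φ.Realize (fun i => (x i : M)) ↔ φ.Realize (fun i => (y i : M)))
    (hext : ∀ f : A → A, Function.Injective f →
      (∀ a b : A, r a b → r (f a) (f b)) →
      ∃ g : M ≃[L] M, ∀ a : A, g a = f a) :
    ¬ ∃ v : ℕ → (M →₀ F), (∀ i : ℕ, ((v i).support : Set M) ⊆ A) ∧
      ∀ i : ℕ, autSpan L F (Set.range v) ≠ autSpan L F (v '' Set.Iio i) := by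
  classical
  rintro ⟨v, hsupp, hne⟩
  haveI : IsWellOrder ↥A r := hwo
  -- the collapsed vectors
  set redv : ℕ → (M →₀ F) := fun j => Finsupp.mapDomain (mu (A := A) r) (v j) with hredv
  -- a finite set supporting all collapsed vectors
  set K : Set M := Subtype.val '' ({a : ↥A | ¬ mov r a} ∪ Set.range (minCls r)) with hK
  have hKfin : K.Finite := (immov_finite.union range_minCls_finite).image _
  have hredK : ∀ j, redv j ∈ Finsupp.supported F F K := by
    intro j
    rw [Finsupp.mem_supported]
    intro x hx
    have h1 : x ∈ (v j).support.image (mu (A := A) r) :=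
      Finsupp.mapDomain_support (Finset.mem_coe.1 hx)
    obtain ⟨y, hy, rfl⟩ := Finset.mem_image.1 h1
    have hyA : y ∈ A := hsupp j hy
    by_cases hm : mov r ⟨y, hyA⟩
    · rw [mu_of_movable hyA hm]
      exact ⟨minCls r ⟨y, hyA⟩, Or.inr ⟨⟨y, hyA⟩, rfl⟩, rfl⟩
    · rw [mu_of_immovable hyA hm]
      exact ⟨⟨y, hyA⟩, Or.inl hm, rfl⟩
  -- the plain span of the collapsed vectors is finitely generated
  haveI : Finite ↥K := hKfin.to_subtype
  have hfd : Module.Finite F ↥(Finsupp.supported F F K) := by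
    have e1 := Finsupp.supportedEquivFinsupp (M := F) (R := F) K
    have e2 := Finsupp.linearEquivFunOnFinite F F ↥K
    exact Module.Finite.equiv (e1.trans e2).symm
  haveI : IsNoetherian F ↥(Finsupp.supported F F K) := IsNoetherian.iff_fg (V := ↥(Finsupp.supported F F K)) |>.2 hfd
  set Q : Submodule F (M →₀ F) := Submodule.span F (Set.range redv) with hQ
  have hQP : Q ≤ Finsupp.supported F F K := by
    rw [hQ, Submodule.span_le]
    rintro x ⟨j, rfl⟩
    exact hredK j
  have hQfg : Q.FG := by
    have h1 : (Q.comap (Finsupp.supported F F K).subtype).FG := IsNoetherian.noetherian _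
    have h2 := Submodule.FG.map (f := (Finsupp.supported F F K).subtype) h1
    rwa [Submodule.map_comap_subtype, inf_eq_right.2 hQP] at h2
  obtain ⟨sfin, hsfin⟩ := hQfg
  have hex : ∀ y ∈ sfin, ∃ T : Finset (M →₀ F), ↑T ⊆ Set.range redv ∧
      y ∈ Submodule.span F (↑T : Set (M →₀ F)) := by
    intro y hy
    apply Submodule.mem_span_finite_of_mem_span
    have h3 : y ∈ Q := hsfin ▸ Submodule.subset_span (Finset.mem_coe.2 hy)
    rwa [hQ] at h3
  choose T hT1 hT2 using hex
  set U : Finset (M →₀ F) := sfin.attach.biUnion (fun y => T y.1 y.2) with hU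
  have hUsub : (↑U : Set (M →₀ F)) ⊆ Set.range redv := by
    intro z hz
    rw [hU] at hz
    simp only [Finset.coe_biUnion, Set.mem_iUnion, Finset.mem_coe] at hz
    obtain ⟨y, hy, hzy⟩ := hz
    exact hT1 y.1 y.2 hzy
  have hQle : Q ≤ Submodule.span F (↑U : Set (M →₀ F)) := by
    rw [← hsfin, Submodule.span_le]
    intro y hy
    have hy' : y ∈ sfin := Finset.mem_coe.1 hy
    refine Submodule.span_mono ?_ (hT2 y hy')
    rw [hU]
    intro z hz
    exact Finset.mem_coe.2 (Finset.mem_biUnion.2 ⟨⟨y, hy'⟩, Finset.mem_attach _ _,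
      Finset.mem_coe.1 hz⟩)
  set idx : (M →₀ F) → ℕ := fun z => if h : ∃ j, redv j = z then h.choose + 1 else 0
    with hidx
  set i₂ : ℕ := U.sup idx with hi₂
  have hUim : (↑U : Set (M →₀ F)) ⊆ redv '' (Set.Iio i₂) := by
    intro z hz
    have hex2 : ∃ j, redv j = z := hUsub hz
    refine ⟨hex2.choose, ?_, hex2.choose_spec⟩
    have h4 : idx z = hex2.choose + 1 := by rw [hidx]; exact dif_pos hex2
    have h5 : idx z ≤ i₂ := Finset.le_sup (Finset.mem_coe.1 hz)
    rw [h4] at h5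
    exact Nat.lt_of_lt_of_le (Nat.lt_succ_self _) h5
  -- the finite stage capturing all occupied classes
  set ΘS : Set Ordinal :=
    {ξ | ∃ (j : ℕ) (x : ↥A), (x : M) ∈ (v j).support ∧ mov r x ∧ δ r x = ξ} with hΘ
  have hΘfin : ΘS.Finite := by
    apply (range_delta_finite (r := r)).subset
    rintro ξ ⟨j, x, -, -, rfl⟩
    exact ⟨x, rfl⟩
  set J : Ordinal → ℕ := fun ξ => if h : ∃ (j : ℕ), ∃ (x : ↥A),
      (x : M) ∈ (v j).support ∧ mov r x ∧ δ r x = ξ then h.choose else 0 with hJ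
  set i₁ : ℕ := hΘfin.toFinset.sup J + 1 with hi₁
  set istar : ℕ := max i₁ i₂ with histar
  set W : Submodule F (M →₀ F) := autSpan L F (v '' Set.Iio istar) with hW
  have hsingle_le : ∀ j, j < istar → autSpan L F {v j} ≤ W := by
    intro j hj
    apply autSpan_mono
    exact Set.singleton_subset_iff.2 ⟨j, hj, rfl⟩
  have hDD_W : ∀ (j : ℕ) (x : ↥A), (x : M) ∈ (v j).support → mov r x →
      DD L r F x ≤ W := by
    intro j x hx hm
    have hmemΘ : δ r x ∈ ΘS := ⟨j, x, hx, hm, rfl⟩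
    have hex3 : ∃ (j' : ℕ), ∃ (x' : ↥A),
        (x' : M) ∈ (v j').support ∧ mov r x' ∧ δ r x' = δ r x := ⟨j, x, hx, hm, rfl⟩
    obtain ⟨x', hx', hm', hδ'⟩ := hex3.choose_spec
    have hj'lt : hex3.choose < istar := by
      have h5 : J (δ r x) = hex3.choose := by rw [hJ]; exact dif_pos hex3
      have h6 : J (δ r x) ≤ hΘfin.toFinset.sup J :=
        Finset.le_sup (hΘfin.mem_toFinset.2 hmemΘ)
      have h7 : hex3.choose < i₁ := by omega
      exact lt_of_lt_of_le h7 (le_max_left _ _)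
    have h8 : DD L r F x = DD L r F x' := DD_congr hδ'.symm
    rw [h8]
    exact le_trans (DD_le_autSpan hext (v hex3.choose) (hsupp _) hx' hm')
      (hsingle_le _ hj'lt)
  have hred_in : ∀ j, redv j ∈ autSpan L F {v j} := by
    intro j
    have h8 : v j - redv j ∈ autSpan L F {v j} :=
      sub_red_mem (hsupp j) (fun a ha hm => DD_le_autSpan hext (v j) (hsupp j) ha hm)
    have h9 : v j ∈ autSpan L F {v j} := mem_autSpan rfl
    have h10 : redv j = v j - (v j - redv j) := (sub_sub_cancel _ _).symm
    rw [h10]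
    exact sub_mem h9 h8
  have hred_W : ∀ j, redv j ∈ W := by
    intro j
    have h10 : redv j ∈ Q := Submodule.subset_span ⟨j, rfl⟩
    have h11 : Q ≤ W := by
      refine le_trans hQle (le_trans (Submodule.span_mono hUim) ?_)
      rw [Submodule.span_le]
      rintro z ⟨j', hj', rfl⟩
      exact hsingle_le j' (lt_of_lt_of_le hj' (le_max_right _ _)) (hred_in j')
    exact h11 h10
  have hfinal : autSpan L F (Set.range v) = autSpan L F (v '' Set.Iio istar) := by
    refine le_antisymm ?_ (autSpan_mono (Set.image_subset_range _ _))
    apply autSpan_le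
    intro g w hw
    obtain ⟨j, rfl⟩ := hw
    have h12 : v j - redv j ∈ W := sub_red_mem (hsupp j) (fun a ha hm => hDD_W j a ha hm)
    have h13 : Finsupp.mapDomain ⇑g (v j) =
        Finsupp.mapDomain ⇑g (v j - redv j) + Finsupp.mapDomain ⇑g (redv j) := by
      rw [← Finsupp.mapDomain_add, sub_add_cancel]
    rw [h13]
    exact add_mem (mapDomain_mem_autSpan h12 g) (mapDomain_mem_autSpan (hred_W j) g)
  exact hne istar hfinal
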